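/- Suppose an algebra H over a field k has two complete sets of pairwise non-isomorphic simple modules {D¹_μ : μ ∈ B¹} and {D²_ν : ν ∈ B²}, and a family of H-modules {S_λ : λ ∈ B} with B¹, B² ⊆ B, such that: for partial orders ≤₁, ≤₂ on B, [S_λ : D¹_μ] ≠ 0 implies μ ≤₁ λ with [S_μ : D¹_μ] = 1 (and similarly for D², ≤₂), and there is a bijection γ : B¹ → B² with [S_λ : D¹_μ] = [S_λ : D²_{γ(μ)}] for all λ, μ. Then the bijection c : B¹ → B² determined by D¹_μ ≅ D²_{c(μ)} equals γ. -/
import Mathlib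


/-- Suppose an algebra `H` over a field `k` has two complete sets of
pairwise non-isomorphic simple modules `{D¹_μ : μ ∈ B¹}` and `{D²_ν : ν ∈ B²}`, and a
family of `H`-modules `{S_λ : λ ∈ B}` with `B¹, B² ⊆ B`, such that for partial orders
`≤₁, ≤₂` on `B` the multiplicities `[S_λ : D¹_μ]` (encoded by a function `m1`, and `m2`
for `D²`, invariant under isomorphism of the simple module) satisfy
`[S_λ : D¹_μ] ≠ 0 → μ ≤₁ λ` and `[S_μ : D¹_μ] = 1` (similarly for `D²`, `≤₂`), and
there is a bijection `γ : B¹ → B²` with `[S_λ : D¹_μ] = [S_λ : D²_{γ(μ)}]` for all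
`λ, μ`.  Then the bijection `c : B¹ → B²` determined by `D¹_μ ≅ D²_{c(μ)}` equals `γ`. -/
theorem matching_bijection_eq {k H : Type*} [Field k] [Ring H] [Algebra k H]
    {B : Type*} {B1 B2 : Set B} (le1 le2 : B → B → Prop)
    (hle1 : IsPartialOrder B le1) (hle2 : IsPartialOrder B le2)
    (Sm : B → Type*) [∀ l, AddCommGroup (Sm l)] [∀ l, Module H (Sm l)]
    (D1 : B1 → Type*) [∀ m, AddCommGroup (D1 m)] [∀ m, Module H (D1 m)]
    (D2 : B2 → Type*) [∀ m, AddCommGroup (D2 m)] [∀ m, Module H (D2 m)]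
    (hD1simple : ∀ m, IsSimpleModule H (D1 m))
    (hD2simple : ∀ m, IsSimpleModule H (D2 m))
    (hD1pair : ∀ m m', Nonempty (D1 m ≃ₗ[H] D1 m') → m = m')
    (hD2pair : ∀ m m', Nonempty (D2 m ≃ₗ[H] D2 m') → m = m')
    (hD1complete : ∀ (L : Type*) [AddCommGroup L] [Module H L],
      IsSimpleModule H L → ∃ m, Nonempty (L ≃ₗ[H] D1 m))
    (hD2complete : ∀ (L : Type*) [AddCommGroup L] [Module H L],
      IsSimpleModule H L → ∃ m, Nonempty (L ≃ₗ[H] D2 m))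
    -- `m1 l μ = [S_l : D¹_μ]`, `m2 l ν = [S_l : D²_ν]`; multiplicity only depends on the
    -- isomorphism class of the simple module
    (m1 : B → B1 → ℕ) (m2 : B → B2 → ℕ)
    (hmult_iso : ∀ (l : B) (μ : B1) (ν : B2),
      Nonempty (D1 μ ≃ₗ[H] D2 ν) → m1 l μ = m2 l ν)
    -- unitriangularity of the decomposition numbers
    (htri1 : ∀ (l : B) (μ : B1), m1 l μ ≠ 0 → le1 (μ : B) l)
    (hdiag1 : ∀ μ : B1, m1 (μ : B) μ = 1)
    (htri2 : ∀ (l : B) (ν : B2), m2 l ν ≠ 0 → le2 (ν : B) l)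
    (hdiag2 : ∀ ν : B2, m2 (ν : B) ν = 1)
    -- the bijection matching the decomposition numbers
    (γ : B1 → B2) (hγbij : Function.Bijective γ)
    (hγ : ∀ (l : B) (μ : B1), m1 l μ = m2 l (γ μ))
    -- the bijection matching isomorphism classes of simple modules
    (c : B1 → B2) (hc : ∀ μ : B1, Nonempty (D1 μ ≃ₗ[H] D2 (c μ))) :
    c = γ := by
  funext μ
  have key : ∀ l : B, m2 l (c μ) = m2 l (γ μ) := fun l => by
    rw [← hmult_iso l μ (c μ) (hc μ), hγ]
  have h1 : le2 (↑(c μ)) (↑(γ μ)) := by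
    apply htri2
    rw [key]
    rw [hdiag2]
    exact one_ne_zero
  have h2 : le2 (↑(γ μ)) (↑(c μ)) := by
    apply htri2
    rw [← key, hdiag2]
    exact one_ne_zero
  exact Subtype.ext (hle2.antisymm _ _ h1 h2)
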